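/- For primes p_m < p_n (both ≥ 5), the congruence (p_n² − 1)/6 ≡ (p_m² − 1)/6 (mod ∏_{5 ≤ p ≤ p_m, p prime} p) fails; equivalently, there is no positive integer a with p_m² + a·(product of all primes ≤ p_m) = p_n². -/
import Mathlib

lemma six_dvd_sq_sub_one (p : ℕ) (hp : p.Prime) (h5 : 5 ≤ p) : 6 ∣ p ^ 2 - 1 := by
  have h2 : p % 2 ≠ 0 := by
    intro h
    have : (2 : ℕ) ∣ p := Nat.dvd_of_mod_eq_zero h
    have := (Nat.prime_dvd_prime_iff_eq Nat.prime_two hp).mp this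
    omega
  have h3 : p % 3 ≠ 0 := by
    intro h
    have : (3 : ℕ) ∣ p := Nat.dvd_of_mod_eq_zero h
    have := (Nat.prime_dvd_prime_iff_eq Nat.prime_three hp).mp this
    omega
  have hr : p % 6 = 1 ∨ p % 6 = 5 := by omega
  have hsq : p ^ 2 % 6 = 1 := by
    rw [Nat.pow_mod]
    rcases hr with h | h <;> simp [h]
  have hge : 1 ≤ p ^ 2 := Nat.one_le_pow _ _ (by omega)
  omega

lemma pm_dvd_pn (pm pn : ℕ) (hpm : pm.Prime) (hpn : pn.Prime) (hlt : pm < pn)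
    (h : pm ∣ pn ^ 2) : False := by
  have := hpm.dvd_of_dvd_pow h
  have := (Nat.prime_dvd_prime_iff_eq hpm hpn).mp this
  omega

theorem origins_incongruent (pm pn : ℕ) (hpm : pm.Prime) (hpn : pn.Prime)
    (h5 : 5 ≤ pm) (hlt : pm < pn) :
    ¬ ((((pn ^ 2 - 1) / 6 : ℕ) : ℤ) ≡ (((pm ^ 2 - 1) / 6 : ℕ) : ℤ)
        [ZMOD (∏ q ∈ (Finset.Icc 5 pm).filter Nat.Prime, q)]) ∧
    ¬ ∃ a : ℕ, 0 < a ∧ pm ^ 2 + a * (∏ q ∈ (Finset.Iic pm).filter Nat.Prime, q) = pn ^ 2 := by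
  have h5n : 5 ≤ pn := by omega
  have h6m := six_dvd_sq_sub_one pm hpm h5
  have h6n := six_dvd_sq_sub_one pn hpn h5n
  constructor
  · intro h
    have hmem : pm ∈ (Finset.Icc 5 pm).filter Nat.Prime := by
      simp [Finset.mem_filter, Finset.mem_Icc, h5, hpm]
    have hdvdN : pm ∣ ∏ q ∈ (Finset.Icc 5 pm).filter Nat.Prime, q :=
      Finset.dvd_prod_of_mem _ hmem
    have hdvdZ : (pm : ℤ) ∣ (∏ q ∈ (Finset.Icc 5 pm).filter Nat.Prime, (q : ℤ)) := by
      rw [← Nat.cast_prod]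
      exact_mod_cast hdvdN
    have h' : (((pn ^ 2 - 1) / 6 : ℕ) : ℤ) ≡ (((pm ^ 2 - 1) / 6 : ℕ) : ℤ) [ZMOD (pm : ℤ)] :=
      h.of_dvd hdvdZ
    have hd : (pm : ℤ) ∣ (((pm ^ 2 - 1) / 6 : ℕ) : ℤ) - (((pn ^ 2 - 1) / 6 : ℕ) : ℤ) :=
      h'.dvd
    have hd6 : (pm : ℤ) ∣ 6 * ((((pm ^ 2 - 1) / 6 : ℕ) : ℤ) - (((pn ^ 2 - 1) / 6 : ℕ) : ℤ)) :=
      hd.mul_left 6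
    have e1 : (6 : ℤ) * (((pm ^ 2 - 1) / 6 : ℕ) : ℤ) = (pm : ℤ) ^ 2 - 1 := by
      have h1 : 1 ≤ pm ^ 2 := Nat.one_le_pow _ _ (by omega)
      have hcast : ((6 * ((pm ^ 2 - 1) / 6) : ℕ) : ℤ) = ((pm ^ 2 - 1 : ℕ) : ℤ) := by
        rw [Nat.mul_div_cancel' h6m]
      rw [Nat.cast_sub h1] at hcast
      push_cast at hcast ⊢
      linarith [hcast]
    have e2 : (6 : ℤ) * (((pn ^ 2 - 1) / 6 : ℕ) : ℤ) = (pn : ℤ) ^ 2 - 1 := by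
      have h1 : 1 ≤ pn ^ 2 := Nat.one_le_pow _ _ (by omega)
      have hcast : ((6 * ((pn ^ 2 - 1) / 6) : ℕ) : ℤ) = ((pn ^ 2 - 1 : ℕ) : ℤ) := by
        rw [Nat.mul_div_cancel' h6n]
      rw [Nat.cast_sub h1] at hcast
      push_cast at hcast ⊢
      linarith [hcast]
    have hd' : (pm : ℤ) ∣ (pm : ℤ) ^ 2 - (pn : ℤ) ^ 2 := by
      have := hd6
      rw [mul_sub, e1, e2] at this
      have heq : (pm : ℤ) ^ 2 - 1 - ((pn : ℤ) ^ 2 - 1) = (pm : ℤ) ^ 2 - (pn : ℤ) ^ 2 := by ring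
      rwa [heq] at this
    have hpn2 : (pm : ℤ) ∣ (pn : ℤ) ^ 2 := by
      have hsq : (pm : ℤ) ∣ (pm : ℤ) ^ 2 := dvd_pow_self _ (by norm_num)
      have := dvd_sub hsq hd'
      simpa using this
    have : pm ∣ pn ^ 2 := by exact_mod_cast hpn2
    exact pm_dvd_pn pm pn hpm hpn hlt this
  · rintro ⟨a, ha, heq⟩
    have hmem : pm ∈ (Finset.Iic pm).filter Nat.Prime := by
      simp [Finset.mem_filter, Finset.mem_Iic, hpm]
    have hdvdN : pm ∣ ∏ q ∈ (Finset.Iic pm).filter Nat.Prime, q :=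
      Finset.dvd_prod_of_mem _ hmem
    have : pm ∣ pn ^ 2 := by
      rw [← heq]
      exact Nat.dvd_add (dvd_pow_self _ (by norm_num)) (hdvdN.mul_left a)
    exact pm_dvd_pn pm pn hpm hpn hlt this
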